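/- arXiv:2403.12909 — 3 statements merged into one kernel-verified Lean document; each statement's English description precedes it below -/
import Mathlib

section
/- There exists a constant c > 0 such that for all α, α₀ ∈ (0, π) with |α − α₀| sufficiently small, (sin α₀ (1 − cos h) + cos α₀ (h − sin h)) / (h² sin²((α + α₀)/2)) ≤ c / sin α₀, where h = α − α₀. -/
open Real Set

/-- Jordan's inequality on all of `[0, π]`. -/
lemma jordan_full {x : ℝ} (h0 : 0 ≤ x) (h1 : x ≤ π) :
    2 / π * min x (π - x) ≤ Real.sin x := by
  have hπ := Real.pi_pos
  rcases le_total x (π / 2) with hx | hx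
  · calc 2 / π * min x (π - x) ≤ 2 / π * x := by
          apply mul_le_mul_of_nonneg_left (min_le_left _ _) (by positivity)
    _ ≤ Real.sin x := Real.mul_le_sin h0 hx
  · have : 2 / π * (π - x) ≤ Real.sin (π - x) :=
      Real.mul_le_sin (by linarith) (by linarith)
    rw [Real.sin_pi_sub] at this
    calc 2 / π * min x (π - x) ≤ 2 / π * (π - x) := by
          apply mul_le_mul_of_nonneg_left (min_le_right _ _) (by positivity)
    _ ≤ Real.sin x := this

/-- Cubic bound for `h - sin h` on `|h| ≤ 1`. -/
lemma abs_sub_sin_le {h : ℝ} (hh : |h| ≤ 1) : |h - Real.sin h| ≤ |h| ^ 3 / 4 := by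
  have key : ∀ x : ℝ, 0 ≤ x → x ≤ 1 → |x - Real.sin x| ≤ |x| ^ 3 / 4 := by
    intro x hx0 hx1
    rcases eq_or_lt_of_le hx0 with rfl | hx0'
    · simp
    · rw [abs_of_nonneg (by linarith [Real.sin_le hx0]), abs_of_nonneg hx0]
      nlinarith [Real.sin_gt_sub_cube hx0', pow_pos hx0' 3]
  rcases le_total 0 h with hpos | hneg
  · exact key h hpos (by rwa [abs_of_nonneg hpos] at hh)
  · have := key (-h) (by linarith) (by rwa [abs_of_nonpos hneg] at hh)
    rw [Real.sin_neg, show -h - -Real.sin h = -(h - Real.sin h) by ring, abs_neg] at this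
    simpa using this

/-- There are absolute constants `c, δ > 0` such that for all `α, α₀ ∈ (0, π)` with
`|α − α₀| ≤ δ`, setting `h = α − α₀`,
`(sin α₀ (1 − cos h) + cos α₀ (h − sin h)) / (h² sin²((α+α₀)/2)) ≤ c / sin α₀`. -/
theorem key_estimate :
    ∃ c > (0:ℝ), ∃ δ > (0:ℝ), ∀ α α₀ : ℝ, α ∈ Set.Ioo 0 π → α₀ ∈ Set.Ioo 0 π →
      |α - α₀| ≤ δ →
      (Real.sin α₀ * (1 - Real.cos (α - α₀))
          + Real.cos α₀ * ((α - α₀) - Real.sin (α - α₀))) /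
        ((α - α₀) ^ 2 * (Real.sin ((α + α₀) / 2)) ^ 2)
      ≤ c / Real.sin α₀ := by
  refine ⟨20, by norm_num, 1, by norm_num, fun α α₀ hα hα₀ hδ => ?_⟩
  obtain ⟨ha1, ha2⟩ := hα
  obtain ⟨hb1, hb2⟩ := hα₀
  have hπ := Real.pi_pos
  have hs : 0 < Real.sin α₀ := Real.sin_pos_of_pos_of_lt_pi hb1 hb2
  set h := α - α₀ with hdef
  set m := (α + α₀) / 2 with mdef
  clear_value h m
  rcases eq_or_ne h 0 with hh0 | hh0
  · rw [hh0]
    simp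
    positivity
  · have hm1 : 0 < m := by rw [mdef]; linarith
    have hm2 : m < π := by rw [mdef]; linarith
    have hsm : 0 < Real.sin m := Real.sin_pos_of_pos_of_lt_pi hm1 hm2
    -- Jordan bound at m
    have hjordan := jordan_full hm1.le hm2.le
    -- sin α₀ ≤ 2 * min m (π - m)
    have hs1 : Real.sin α₀ ≤ 2 * min m (π - m) := by
      have e1 : Real.sin α₀ ≤ α₀ := Real.sin_le hb1.le
      have e2 : Real.sin α₀ ≤ π - α₀ := by
        calc Real.sin α₀ = Real.sin (π - α₀) := (Real.sin_pi_sub α₀).symm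
        _ ≤ π - α₀ := Real.sin_le (by linarith)
      rcases le_total m (π - m) with hc | hc
      · rw [min_eq_left hc, mdef]; linarith
      · rw [min_eq_right hc, mdef]; linarith
    -- |h| ≤ 2 * min m (π - m)
    have hs2 : |h| ≤ 2 * min m (π - m) := by
      have e1 : |h| ≤ α + α₀ := abs_le.2 ⟨by rw [hdef]; linarith, by rw [hdef]; linarith⟩
      have e2 : |h| ≤ 2 * π - α - α₀ := abs_le.2 ⟨by rw [hdef]; linarith, by rw [hdef]; linarith⟩
      rcases le_total m (π - m) with hc | hc
      · rw [min_eq_left hc, mdef]; linarith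
      · rw [min_eq_right hc, mdef]; linarith
    have h1 : Real.sin α₀ ≤ π * Real.sin m := by
      have : 2 / π * (Real.sin α₀ / 2) ≤ 2 / π * min m (π - m) := by
        apply mul_le_mul_of_nonneg_left (by linarith) (by positivity)
      have h2' := this.trans hjordan
      rw [div_mul_eq_mul_div, div_le_iff₀ hπ] at *
      nlinarith
    have h2 : |h| ≤ π * Real.sin m := by
      have : 2 / π * (|h| / 2) ≤ 2 / π * min m (π - m) := by
        apply mul_le_mul_of_nonneg_left (by linarith) (by positivity)
      have h2' := this.trans hjordan
      rw [div_mul_eq_mul_div, div_le_iff₀ hπ] at h2'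
      nlinarith
    -- numerator bounds
    have hc1 : 1 - Real.cos h ≤ h ^ 2 / 2 := by linarith [Real.one_sub_sq_div_two_le_cos (x := h)]
    have hc0 : 0 ≤ 1 - Real.cos h := by linarith [Real.cos_le_one h]
    have hc2 : Real.cos α₀ * (h - Real.sin h) ≤ |h| ^ 3 / 4 := by
      calc Real.cos α₀ * (h - Real.sin h) ≤ |Real.cos α₀ * (h - Real.sin h)| := le_abs_self _
      _ = |Real.cos α₀| * |h - Real.sin h| := abs_mul _ _
      _ ≤ 1 * (|h| ^ 3 / 4) := by
            apply mul_le_mul (Real.abs_cos_le_one _) (abs_sub_sin_le hδ)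
              (abs_nonneg _) zero_le_one
      _ = |h| ^ 3 / 4 := one_mul _
    have hD : 0 < h ^ 2 * Real.sin m ^ 2 := by positivity
    rw [div_le_div_iff₀ hD hs]
    have ht2 : |h| ^ 2 = h ^ 2 := sq_abs h
    have ht : 0 < |h| := abs_pos.2 hh0
    have hπ2 : π ^ 2 ≤ 10 := by nlinarith [Real.pi_lt_d2]
    have A1 : Real.sin α₀ ^ 2 ≤ π ^ 2 * Real.sin m ^ 2 := by nlinarith
    have A2 : Real.sin α₀ * |h| ≤ π ^ 2 * Real.sin m ^ 2 := by nlinarith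
    rw [← ht2] at hc1 ⊢
    have E1 : (Real.sin α₀ * (1 - Real.cos h) + Real.cos α₀ * (h - Real.sin h)) * Real.sin α₀
        ≤ (Real.sin α₀ * (|h| ^ 2 / 2) + |h| ^ 3 / 4) * Real.sin α₀ := by
      have := mul_le_mul_of_nonneg_left hc1 hs.le
      apply mul_le_mul_of_nonneg_right _ hs.le
      linarith
    have P1 := mul_le_mul_of_nonneg_right A1 (sq_nonneg |h|)
    have P2 := mul_le_mul_of_nonneg_right A2 (sq_nonneg |h|)
    have P3 : 0 ≤ (10 - π ^ 2) * (Real.sin m ^ 2 * |h| ^ 2) :=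
      mul_nonneg (by linarith) (by positivity)
    linarith [E1, P1, P2, P3, mul_nonneg (sq_nonneg (Real.sin m)) (sq_nonneg |h|)]
end

section
/- Let I ⊂ ℝ be an interval on which sin α ≠ 0 in the interior, let α₀ ∈ I with sin α₀ ≠ 0, and define f(α) = sin α − sin α₀ − cos α₀ (α − α₀). Then there exists an absolute constant c > 0 such that for all α ∈ I, |f(α)| / (f'(α))² ≤ c / |f''(α₀)|. -/
open Real Set

/-- `sin u - u cos u ≤ u³/3` for `u ≥ 0`. -/
lemma aux_le_cube {u : ℝ} (hu : 0 ≤ u) : Real.sin u - u * Real.cos u ≤ u ^ 3 / 3 := by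
  have hd : ∀ x : ℝ, HasDerivAt (fun u : ℝ => u ^ 3 / 3 - (Real.sin u - u * Real.cos u))
      (x ^ 2 - x * Real.sin x) x := by
    intro x
    have h1 : HasDerivAt (fun u : ℝ => u ^ 3 / 3) ((3 : ℕ) * x ^ 2 / 3) x := by
      simpa using (hasDerivAt_pow 3 x).div_const 3
    have h3 : HasDerivAt (fun u : ℝ => u * Real.cos u)
        (1 * Real.cos x + x * (-Real.sin x)) x :=
      (hasDerivAt_id x).mul (Real.hasDerivAt_cos x)
    have := h1.sub ((Real.hasDerivAt_sin x).sub h3)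
    refine this.congr_deriv ?_
    push_cast
    ring
  have hmono : MonotoneOn (fun u : ℝ => u ^ 3 / 3 - (Real.sin u - u * Real.cos u))
      (Set.Ici (0 : ℝ)) := by
    apply monotoneOn_of_deriv_nonneg (convex_Ici 0)
    · exact fun x _ => (hd x).continuousAt.continuousWithinAt
    · exact fun x _ => (hd x).differentiableAt.differentiableWithinAt
    · intro x hx
      rw [interior_Ici] at hx
      rw [(hd x).deriv]
      have h := Real.sin_le (le_of_lt hx)
      nlinarith [(le_of_lt (show (0:ℝ) < x from hx))]
  have h0 : (fun u : ℝ => u ^ 3 / 3 - (Real.sin u - u * Real.cos u)) 0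
      ≤ (fun u : ℝ => u ^ 3 / 3 - (Real.sin u - u * Real.cos u)) u :=
    hmono (by simp) hu hu
  simp only [Real.sin_zero, Real.cos_zero] at h0
  nlinarith [h0]

/-- `0 ≤ sin u - u cos u` for `u ∈ [0, π]`. -/
lemma aux_nonneg {u : ℝ} (hu : 0 ≤ u) (hu' : u ≤ π) :
    0 ≤ Real.sin u - u * Real.cos u := by
  have hd : ∀ x : ℝ, HasDerivAt (fun u : ℝ => Real.sin u - u * Real.cos u)
      (x * Real.sin x) x := by
    intro x
    have h3 : HasDerivAt (fun u : ℝ => u * Real.cos u)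
        (1 * Real.cos x + x * (-Real.sin x)) x :=
      (hasDerivAt_id x).mul (Real.hasDerivAt_cos x)
    have := (Real.hasDerivAt_sin x).sub h3
    refine this.congr_deriv ?_
    ring
  have hmono : MonotoneOn (fun u : ℝ => Real.sin u - u * Real.cos u)
      (Set.Icc (0 : ℝ) π) := by
    apply monotoneOn_of_deriv_nonneg (convex_Icc 0 π)
    · exact fun x _ => (hd x).continuousAt.continuousWithinAt
    · exact fun x _ => (hd x).differentiableAt.differentiableWithinAt
    · intro x hx
      rw [interior_Icc] at hx
      rw [(hd x).deriv]
      exact mul_nonneg hx.1.le (Real.sin_nonneg_of_nonneg_of_le_pi hx.1.le hx.2.le)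
  have h0 := hmono (Set.left_mem_Icc.2 Real.pi_pos.le) ⟨hu, hu'⟩ hu
  simpa using h0

set_option maxHeartbeats 1000000 in
/-- Core version of the bound, on `[0, π]`. -/
lemma aux_core {β β₀ : ℝ} (hβ : β ∈ Set.Icc 0 π) (hβ₀ : β₀ ∈ Set.Icc 0 π)
    (hs : Real.sin β₀ ≠ 0) :
    |Real.sin β - Real.sin β₀ - Real.cos β₀ * (β - β₀)|
      ≤ (π ^ 3 / 12 + π) / Real.sin β₀ * (Real.cos β - Real.cos β₀) ^ 2 := by
  have hπ := Real.pi_pos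
  obtain ⟨hβ1, hβ2⟩ := hβ
  obtain ⟨hβ₀1, hβ₀2⟩ := hβ₀
  have hsβ₀ : 0 < Real.sin β₀ :=
    lt_of_le_of_ne (Real.sin_nonneg_of_nonneg_of_le_pi hβ₀1 hβ₀2) (Ne.symm hs)
  set u := (β - β₀) / 2 with hu_def
  set m := (β + β₀) / 2 with hm_def
  have hu2 : |u| ≤ π / 2 := by
    rw [abs_le]; constructor <;> (rw [hu_def]; linarith)
  have hum : |u| ≤ m := by
    rw [abs_le]; constructor <;> (rw [hu_def, hm_def]; linarith)
  have hmu : m ≤ π - |u| := by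
    rw [le_sub_iff_add_le, ← le_sub_iff_add_le', abs_le]
    constructor <;> (rw [hu_def, hm_def]; linarith)
  have habs_sinu : |Real.sin u| = Real.sin |u| := by
    rcases le_or_gt 0 u with h | h
    · rw [abs_of_nonneg h,
        abs_of_nonneg (Real.sin_nonneg_of_nonneg_of_le_pi h (by
          have := le_abs_self u; linarith))]
    · rw [abs_of_neg h, Real.sin_neg,
        abs_of_nonpos (Real.sin_nonpos_of_nonpos_of_neg_pi_le h.le (by
          have := neg_abs_le u; linarith))]
  have hu_abs_nonneg : (0:ℝ) ≤ |u| := abs_nonneg u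
  have hsin_um : Real.sin |u| ≤ Real.sin m := by
    rcases le_or_gt m (π / 2) with h | h
    · exact Real.strictMonoOn_sin.monotoneOn ⟨by linarith, by linarith⟩
        ⟨by linarith, h⟩ hum
    · have hpm : |u| ≤ π - m := by linarith
      have : Real.sin |u| ≤ Real.sin (π - m) :=
        Real.strictMonoOn_sin.monotoneOn ⟨by linarith, by linarith⟩
          ⟨by linarith, by linarith⟩ hpm
      rwa [Real.sin_pi_sub] at this
  have hm0 : 0 ≤ Real.sin m := by
    refine le_trans ?_ hsin_um
    rw [← habs_sinu]; exact abs_nonneg _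
  have hsinβ₀eq : Real.sin β₀ = Real.sin m * Real.cos u - Real.cos m * Real.sin u := by
    rw [show β₀ = m - u by rw [hu_def, hm_def]; ring]
    exact Real.sin_sub m u
  have hAm : |Real.sin u| ≤ Real.sin m := by rw [habs_sinu]; exact hsin_um
  have h2m : Real.sin β₀ ≤ 2 * Real.sin m := by
    rw [hsinβ₀eq]
    have h1 : Real.sin m * Real.cos u ≤ Real.sin m :=
      mul_le_of_le_one_right hm0 (Real.cos_le_one u)
    have h2 : -(Real.cos m * Real.sin u) ≤ Real.sin m := by
      have : |Real.cos m * Real.sin u| ≤ Real.sin m := by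
        rw [abs_mul]
        calc |Real.cos m| * |Real.sin u| ≤ 1 * |Real.sin u| := by
              apply mul_le_mul_of_nonneg_right (Real.abs_cos_le_one m) (abs_nonneg _)
          _ = |Real.sin u| := one_mul _
          _ ≤ Real.sin m := hAm
      linarith [neg_abs_le (Real.cos m * Real.sin u)]
    linarith
  have hsinm_pos : 0 < Real.sin m := by linarith
  -- the key identity
  have hβu : β - β₀ = 2 * u := by rw [hu_def]; ring
  have hcosβ₀ : Real.cos β₀ = Real.cos m * Real.cos u + Real.sin m * Real.sin u := by
    rw [show β₀ = m - u by rw [hu_def, hm_def]; ring]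
    exact Real.cos_sub m u
  have h1 : Real.sin β - Real.sin β₀ = 2 * Real.sin u * Real.cos m := by
    rw [Real.sin_sub_sin]
  have hid : Real.sin β - Real.sin β₀ - Real.cos β₀ * (β - β₀)
      = 2 * Real.cos m * (Real.sin u - u * Real.cos u)
        - 2 * u * (Real.sin m * Real.sin u) := by
    rw [hβu, hcosβ₀]
    linear_combination h1
  -- bound on |sin u - u cos u|
  have hb1 : |Real.sin u - u * Real.cos u| ≤ |u| ^ 3 / 3 := by
    rcases le_or_gt 0 u with h | h
    · rw [abs_of_nonneg (aux_nonneg h (by have := le_abs_self u; linarith)),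
        abs_of_nonneg h]
      exact aux_le_cube h
    · have hv : 0 ≤ -u := by linarith
      have hv' : Real.sin u - u * Real.cos u
          = -(Real.sin (-u) - (-u) * Real.cos (-u)) := by
        rw [Real.sin_neg, Real.cos_neg]; ring
      rw [hv', abs_neg, abs_of_nonneg (aux_nonneg hv (by
          rcases abs_le.1 hu2 with ⟨h1, h2⟩; linarith)),
        abs_of_neg h]
      exact aux_le_cube hv
  have hb2 : |u| ≤ π / 2 * |Real.sin u| := by
    have h := Real.mul_le_sin hu_abs_nonneg hu2
    rw [← habs_sinu] at h
    have h2 := mul_le_mul_of_nonneg_left h (by positivity : (0:ℝ) ≤ π / 2)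
    calc |u| = π / 2 * (2 / π * |u|) := by field_simp
      _ ≤ π / 2 * |Real.sin u| := h2
  have hcos : (Real.cos β - Real.cos β₀) ^ 2
      = 4 * Real.sin m ^ 2 * Real.sin u ^ 2 := by
    rw [Real.cos_sub_cos]; ring
  clear_value u m
  set A := |Real.sin u| with hA_def
  have hA : 0 ≤ A := abs_nonneg _
  have key : |Real.sin β - Real.sin β₀ - Real.cos β₀ * (β - β₀)|
      ≤ (π ^ 3 / 12 + π) * Real.sin m * A ^ 2 := by
    rw [hid]
    have habs : |2 * Real.cos m * (Real.sin u - u * Real.cos u)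
        - 2 * u * (Real.sin m * Real.sin u)|
        ≤ 2 * |Real.cos m| * |Real.sin u - u * Real.cos u|
          + 2 * |u| * (Real.sin m * A) := by
      calc |2 * Real.cos m * (Real.sin u - u * Real.cos u)
            - 2 * u * (Real.sin m * Real.sin u)|
          ≤ |2 * Real.cos m * (Real.sin u - u * Real.cos u)|
            + |2 * u * (Real.sin m * Real.sin u)| := abs_sub _ _
        _ = 2 * |Real.cos m| * |Real.sin u - u * Real.cos u|
            + 2 * |u| * (Real.sin m * A) := by
            simp only [abs_mul, abs_two, abs_of_nonneg hm0]
            try ring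
    refine habs.trans ?_
    have t1 : 2 * |Real.cos m| * |Real.sin u - u * Real.cos u|
        ≤ π ^ 3 / 12 * Real.sin m * A ^ 2 := by
      have h3 : |u| ^ 3 ≤ (π / 2) ^ 3 * A ^ 3 := by
        calc |u| ^ 3 ≤ (π / 2 * A) ^ 3 := pow_le_pow_left₀ hu_abs_nonneg hb2 3
          _ = (π / 2) ^ 3 * A ^ 3 := by ring
      have h4 : |Real.sin u - u * Real.cos u| ≤ (π / 2) ^ 3 * A ^ 3 / 3 :=
        hb1.trans (by linarith)
      have h5 : 2 * |Real.cos m| * |Real.sin u - u * Real.cos u|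
          ≤ 2 * 1 * ((π / 2) ^ 3 * A ^ 3 / 3) := by
        exact mul_le_mul (by nlinarith [Real.abs_cos_le_one m]) h4 (abs_nonneg _)
          (by positivity)
      refine h5.trans ?_
      have h6 : A ^ 3 ≤ Real.sin m * A ^ 2 := by
        nlinarith [mul_le_mul_of_nonneg_right hAm (sq_nonneg A)]
      nlinarith [mul_le_mul_of_nonneg_left h6 (show (0:ℝ) ≤ π ^ 3 / 12 by positivity)]
    have t2 : 2 * |u| * (Real.sin m * A) ≤ π * Real.sin m * A ^ 2 := by
      nlinarith [mul_le_mul_of_nonneg_right hb2 (mul_nonneg hm0 hA)]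
    linarith
  refine key.trans ?_
  rw [hcos, div_mul_eq_mul_div, le_div_iff₀ hsβ₀]
  have hA2 : A ^ 2 = Real.sin u ^ 2 := sq_abs _
  rw [hA2]
  have hc : (0:ℝ) < π ^ 3 / 12 + π := by positivity
  nlinarith [mul_le_mul_of_nonneg_left h2m
      (mul_nonneg (mul_nonneg hc.le hm0) (sq_nonneg (Real.sin u))),
    mul_nonneg (mul_nonneg hc.le (mul_nonneg hm0 hm0)) (sq_nonneg (Real.sin u))]

/-- Lemma B.2: there is an absolute constant `c > 0` (independent of the interval and `α₀`)
such that for any interval `[a,b]` with `sin α ≠ 0` in its interior, any `α₀ ∈ [a,b]` with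
`sin α₀ ≠ 0`, and `f(α) = sin α − sin α₀ − cos α₀ (α − α₀)`, one has
`|f(α)| ≤ (c/|sin α₀|) (f'(α))²`, i.e. `|f(α)| ≤ (c/|f''(α₀)|)(cos α − cos α₀)²` on `[a,b]`. -/
theorem aux_f_bound :
    ∃ c > (0:ℝ), ∀ a b α₀ : ℝ, a ≤ b →
      (∀ α ∈ Set.Ioo a b, Real.sin α ≠ 0) →
      α₀ ∈ Set.Icc a b → Real.sin α₀ ≠ 0 →
      ∀ α ∈ Set.Icc a b,
        |Real.sin α - Real.sin α₀ - Real.cos α₀ * (α - α₀)|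
          ≤ c / |Real.sin α₀| * (Real.cos α - Real.cos α₀) ^ 2 := by
  have hπ := Real.pi_pos
  refine ⟨π ^ 3 / 12 + π, by positivity, ?_⟩
  intro a b α₀ hab hsin hα₀ hs α hα
  -- find n with [a, b] ⊆ [nπ, (n+1)π]
  obtain ⟨n, hsub⟩ : ∃ n : ℤ, Set.Icc a b ⊆ Set.Icc ((n:ℝ) * π) ((n + 1 : ℝ) * π) := by
    refine ⟨⌊a / π⌋, ?_⟩
    have h1 : (⌊a / π⌋ : ℝ) * π ≤ a := by
      have h := Int.floor_le (a / π)
      have := mul_le_mul_of_nonneg_right h hπ.le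
      rwa [div_mul_cancel₀ a hπ.ne'] at this
    have h2 : a < ((⌊a / π⌋ : ℝ) + 1) * π := by
      have h := Int.lt_floor_add_one (a / π)
      have := mul_lt_mul_of_pos_right h hπ
      rwa [div_mul_cancel₀ a hπ.ne'] at this
    have h3 : b ≤ ((⌊a / π⌋ : ℝ) + 1) * π := by
      by_contra h
      push_neg at h
      refine hsin _ ⟨h2, h⟩ ?_
      rw [show ((⌊a / π⌋ : ℝ) + 1) * π = ((⌊a / π⌋ + 1 : ℤ) : ℝ) * π by push_cast; ring]
      exact Real.sin_int_mul_pi _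
    intro x hx
    exact ⟨le_trans h1 hx.1, le_trans hx.2 h3⟩
  obtain ⟨ha1, ha2⟩ := hsub hα
  obtain ⟨hb1, hb2⟩ := hsub hα₀
  set β := α - n * π with hβ_def
  set β₀ := α₀ - n * π with hβ₀_def
  have hβ : β ∈ Set.Icc 0 π := ⟨by rw [hβ_def]; linarith, by rw [hβ_def]; nlinarith⟩
  have hβ₀ : β₀ ∈ Set.Icc 0 π := ⟨by rw [hβ₀_def]; linarith, by rw [hβ₀_def]; nlinarith⟩
  have e1 : Real.sin α = (-1 : ℝ) ^ n * Real.sin β := by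
    rw [show α = β + n * π by rw [hβ_def]; ring]
    exact Real.sin_add_int_mul_pi β n
  have e2 : Real.cos α = (-1 : ℝ) ^ n * Real.cos β := by
    rw [show α = β + n * π by rw [hβ_def]; ring]
    exact Real.cos_add_int_mul_pi β n
  have e3 : Real.sin α₀ = (-1 : ℝ) ^ n * Real.sin β₀ := by
    rw [show α₀ = β₀ + n * π by rw [hβ₀_def]; ring]
    exact Real.sin_add_int_mul_pi β₀ n
  have e4 : Real.cos α₀ = (-1 : ℝ) ^ n * Real.cos β₀ := by
    rw [show α₀ = β₀ + n * π by rw [hβ₀_def]; ring]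
    exact Real.cos_add_int_mul_pi β₀ n
  have habs1 : |(-1 : ℝ) ^ n| = 1 := by
    rcases Int.even_or_odd n with he | ho
    · rw [he.neg_one_zpow, abs_one]
    · rw [ho.neg_one_zpow, abs_neg, abs_one]
  have hsβ₀ : Real.sin β₀ ≠ 0 := by
    intro h
    apply hs
    rw [e3, h, mul_zero]
  have hsβ₀pos : 0 < Real.sin β₀ :=
    lt_of_le_of_ne (Real.sin_nonneg_of_nonneg_of_le_pi hβ₀.1 hβ₀.2) (Ne.symm hsβ₀)
  have hLHS : |Real.sin α - Real.sin α₀ - Real.cos α₀ * (α - α₀)|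
      = |Real.sin β - Real.sin β₀ - Real.cos β₀ * (β - β₀)| := by
    have : Real.sin α - Real.sin α₀ - Real.cos α₀ * (α - α₀)
        = (-1 : ℝ) ^ n * (Real.sin β - Real.sin β₀ - Real.cos β₀ * (β - β₀)) := by
      rw [e1, e3, e4, show α - α₀ = β - β₀ by rw [hβ_def, hβ₀_def]; ring]
      ring
    rw [this, abs_mul, habs1, one_mul]
  have hRHS1 : |Real.sin α₀| = Real.sin β₀ := by
    rw [e3, abs_mul, habs1, one_mul, abs_of_pos hsβ₀pos]
  have hRHS2 : (Real.cos α - Real.cos α₀) ^ 2 = (Real.cos β - Real.cos β₀) ^ 2 := by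
    rw [e2, e4, show (-1 : ℝ) ^ n * Real.cos β - (-1 : ℝ) ^ n * Real.cos β₀
        = (-1 : ℝ) ^ n * (Real.cos β - Real.cos β₀) by ring,
      mul_pow, ← sq_abs ((-1 : ℝ) ^ n), habs1, one_pow, one_mul]
  rw [hLHS, hRHS1, hRHS2]
  exact aux_core hβ hβ₀ hsβ₀
end

section
/- Let φ : ℝ → ℝ be a nonzero compactly supported C¹ function, let x̌₁, …, x̌_K ∈ ℝ² be distinct, let Ω ⊂ [0, 2π] be a nonempty open set, and let θ ∈ ℝ^K. If Σ_{i=1}^K θ_i φ'(p + α⃗·x̌_i) = 0 for all p ∈ ℝ and all α ∈ Ω (where α⃗ = (cos α, sin α)), and φ' is not identically zero, then θ = 0. -/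
open Real

/-- The zero set of `α ↦ a cos α + b sin α` is countable when `(a,b) ≠ 0`. -/
lemma countable_trig_zeros {a b : ℝ} (h : ¬(a = 0 ∧ b = 0)) :
    {α : ℝ | a * Real.cos α + b * Real.sin α = 0}.Countable := by
  set z : ℂ := ⟨a, b⟩ with hzdef
  have hz : z ≠ 0 := by
    intro hz0
    apply h
    rw [Complex.ext_iff] at hz0
    exact hz0
  have habs : (0:ℝ) < ‖z‖ := by
    simpa using (norm_pos_iff.mpr hz)
  have hcos : Real.cos (Complex.arg z) = a / ‖z‖ := Complex.cos_arg hz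
  have hsin : Real.sin (Complex.arg z) = b / ‖z‖ := Complex.sin_arg z
  have key : ∀ α : ℝ, a * Real.cos α + b * Real.sin α
      = ‖z‖ * Real.cos (α - Complex.arg z) := by
    intro α
    rw [Real.cos_sub, hcos, hsin]
    field_simp
  have hsub : {α : ℝ | a * Real.cos α + b * Real.sin α = 0}
      ⊆ Set.range (fun k : ℤ => Complex.arg z + (2 * (k:ℝ) + 1) * Real.pi / 2) := by
    intro α hα
    have h0 : Real.cos (α - Complex.arg z) = 0 := by
      have := hα
      rw [Set.mem_setOf_eq, key α] at this
      exact (mul_eq_zero.1 this).resolve_left (ne_of_gt habs)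
    obtain ⟨k, hk⟩ := Real.cos_eq_zero_iff.1 h0
    exact ⟨k, by simp only []; linarith⟩
  exact Set.Countable.mono hsub (Set.countable_range _)

/-- Distinct translates of a nonzero compactly supported continuous function
are linearly independent. -/
lemma translates_aux {K : ℕ} (f : ℝ → ℝ) (hf : Continuous f)
    (hs : HasCompactSupport f) (hne : ∃ t, f t ≠ 0)
    (c : Fin K → ℝ) (hc : Function.Injective c) (θ : Fin K → ℝ)
    (h : ∀ p : ℝ, ∑ i, θ i * f (p + c i) = 0) : θ = 0 := by
  by_contra hθ
  -- the set of indices with nonzero coefficient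
  have hSne : (Finset.univ.filter fun i => θ i ≠ 0).Nonempty := by
    by_contra hS
    apply hθ
    funext i
    by_contra hi
    exact hS ⟨i, Finset.mem_filter.2 ⟨Finset.mem_univ i, hi⟩⟩
  set S := Finset.univ.filter fun i => θ i ≠ 0 with hSdef
  obtain ⟨i₀, hi₀S, hi₀min⟩ := S.exists_min_image c hSne
  -- gap δ between the minimal shift and the others
  set T := (S.erase i₀).image (fun i => c i - c i₀) with hTdef
  have hδ : ∃ δ : ℝ, 0 < δ ∧ ∀ i ∈ S, i ≠ i₀ → δ ≤ c i - c i₀ := by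
    by_cases hT : T.Nonempty
    · refine ⟨T.min' hT, ?_, ?_⟩
      · obtain ⟨j, hj, hjeq⟩ := Finset.mem_image.1 (T.min'_mem hT)
        have hjS : j ∈ S := Finset.mem_of_mem_erase hj
        have hjne : j ≠ i₀ := Finset.ne_of_mem_erase hj
        have hle : c i₀ ≤ c j := hi₀min j hjS
        have : c i₀ ≠ c j := fun hcc => hjne (hc hcc.symm)
        rw [← hjeq]
        exact sub_pos.2 (lt_of_le_of_ne hle this)
      · intro i hiS hii
        exact T.min'_le _ (Finset.mem_image.2 ⟨i, Finset.mem_erase.2 ⟨hii, hiS⟩, rfl⟩)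
    · refine ⟨1, one_pos, fun i hiS hii => ?_⟩
      exfalso
      exact hT ⟨c i - c i₀, Finset.mem_image.2 ⟨i, Finset.mem_erase.2 ⟨hii, hiS⟩, rfl⟩⟩
  obtain ⟨δ, hδpos, hδle⟩ := hδ
  -- the supremum of the support
  have hts : (tsupport f).Nonempty := by
    obtain ⟨t, ht⟩ := hne
    exact ⟨t, subset_closure ht⟩
  have htc : IsCompact (tsupport f) := hs
  set s := sSup (tsupport f) with hsdef
  have hsmem : s ∈ tsupport f := htc.sSup_mem hts
  have hbdd : BddAbove (tsupport f) := htc.bddAbove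
  have hgt_zero : ∀ u : ℝ, s < u → f u = 0 := by
    intro u hu
    apply image_eq_zero_of_notMem_tsupport
    intro hmem
    exact absurd (le_csSup hbdd hmem) (not_le.2 hu)
  -- find a support point t with s - δ < t ≤ s
  have hclos : s ∈ closure (Function.support f) := hsmem
  obtain ⟨t, htsup, htd⟩ := Metric.mem_closure_iff.1 hclos δ hδpos
  have htle : t ≤ s := le_csSup hbdd (subset_closure htsup)
  have htgt : s - δ < t := by
    have : |s - t| < δ := by simpa [Real.dist_eq] using htd
    have := abs_lt.1 this
    linarith [this.2]
  -- evaluate at p = t - c i₀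
  have hsum := h (t - c i₀)
  have hterm : ∀ i ∈ Finset.univ, i ≠ i₀ → θ i * f (t - c i₀ + c i) = 0 := by
    intro i _ hii
    by_cases hiS : i ∈ S
    · have hgap : δ ≤ c i - c i₀ := hδle i hiS hii
      have : s < t - c i₀ + c i := by linarith
      rw [hgt_zero _ this, mul_zero]
    · have : θ i = 0 := by
        by_contra hzz
        exact hiS (Finset.mem_filter.2 ⟨Finset.mem_univ i, hzz⟩)
      rw [this, zero_mul]
  rw [Finset.sum_eq_single i₀ hterm (fun h => absurd (Finset.mem_univ i₀) h)] at hsum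
  have hft : f t ≠ 0 := htsup
  have hθi₀ : θ i₀ ≠ 0 := (Finset.mem_filter.1 hi₀S).2
  have : t - c i₀ + c i₀ = t := by ring
  rw [this] at hsum
  exact (mul_ne_zero hθi₀ hft) hsum

/-- If a linear combination of translates `Σ θ_i φ'(p + α⃗·x̌_i)` vanishes for all `p ∈ ℝ` and
all `α` in a nonempty open set `Ω ⊆ [0, 2π]`, where the `x̌_i` are distinct, `φ` is a nonzero
compactly supported `C¹` function and `φ'` is not identically zero, then `θ = 0`. -/
theorem translates_linearly_independent (K : ℕ) (φ : ℝ → ℝ)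
    (hφ1 : ContDiff ℝ 1 φ) (hsupp : HasCompactSupport φ) (hφne : φ ≠ 0)
    (x : Fin K → ℝ × ℝ) (hx : Function.Injective x)
    (Ω : Set ℝ) (hΩo : IsOpen Ω) (hΩne : Ω.Nonempty) (hΩ : Ω ⊆ Set.Icc 0 (2 * Real.pi))
    (θ : Fin K → ℝ)
    (hder : ∃ t : ℝ, deriv φ t ≠ 0)
    (hzero : ∀ p : ℝ, ∀ α ∈ Ω,
      ∑ i, θ i * deriv φ (p + (Real.cos α * (x i).1 + Real.sin α * (x i).2)) = 0) :
    θ = 0 := by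
  -- the set of "bad" angles where two shifts coincide
  set bad : Set ℝ := ⋃ (i : Fin K) (j : Fin K) (_ : i ≠ j),
    {α : ℝ | ((x i).1 - (x j).1) * Real.cos α + ((x i).2 - (x j).2) * Real.sin α = 0}
    with hbaddef
  have hbadc : bad.Countable := by
    apply Set.countable_iUnion
    intro i
    apply Set.countable_iUnion
    intro j
    apply Set.countable_iUnion
    intro hij
    apply countable_trig_zeros
    rintro ⟨h1, h2⟩
    apply hij
    apply hx
    have e1 : (x i).1 = (x j).1 := by linarith
    have e2 : (x i).2 = (x j).2 := by linarith
    exact Prod.ext e1 e2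
  -- choose a good angle in Ω
  have hgood : (Ω \ bad).Nonempty := by
    by_contra hcon
    have hsub : Ω ⊆ bad := by
      intro α hα
      by_contra hb
      exact hcon ⟨α, hα, hb⟩
    have h1 : (0:ENNReal) < MeasureTheory.volume Ω := hΩo.measure_pos _ hΩne
    have h2 : MeasureTheory.volume Ω = 0 :=
      MeasureTheory.measure_mono_null hsub (hbadc.measure_zero _)
    rw [h2] at h1
    exact lt_irrefl _ h1
  obtain ⟨α, hαΩ, hαbad⟩ := hgood
  -- shifts are distinct for this angle
  set c : Fin K → ℝ := fun i => Real.cos α * (x i).1 + Real.sin α * (x i).2 with hcdef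
  have hcinj : Function.Injective c := by
    intro i j hcij
    by_contra hij
    apply hαbad
    rw [hbaddef]
    refine Set.mem_iUnion.2 ⟨i, Set.mem_iUnion.2 ⟨j, Set.mem_iUnion.2 ⟨hij, ?_⟩⟩⟩
    simp only [Set.mem_setOf_eq, hcdef] at hcij ⊢
    nlinarith [hcij]
  -- apply the translate lemma to f = deriv φ
  have hfc : Continuous (deriv φ) := hφ1.continuous_deriv le_rfl
  have hfs : HasCompactSupport (deriv φ) := hsupp.deriv
  exact translates_aux (deriv φ) hfc hfs hder c hcinj θ (fun p => hzero p α hαΩ)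
end
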